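/- Let H be a real Hilbert space, v : H → H Lipschitz with constant L, c-strongly monotone (c > 0), with zero α*. Fix 0 < γ ≤ 1/L and α_1 ∈ H, and define α_{n+1/2} = α_n - γ v(α_n), α_{n+1} = α_n - γ v(α_{n+1/2}). Suppose the averaged-iterate bound Σ_{i=1}^n ⟨v(α_{i+1/2}), α_{i+1/2} - α⟩ ≤ ‖α - α_1‖²/(2γ) holds for all α ∈ H and all n. Then the averages ᾱ_n = (1/n) Σ_{i=1}^n α_{i+1/2} satisfy ‖α* - ᾱ_n‖² ≤ ‖α* - α_1‖²/(2γ c n) for all n ≥ 1. -/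

import Mathlib

open scoped RealInnerProductSpace

theorem stmt7 {H : Type*} [NormedAddCommGroup H] [InnerProductSpace ℝ H] [CompleteSpace H]
    (v : H → H) (L c : ℝ) (hL : 0 < L) (hc : 0 < c)
    (hLip : ∀ x y : H, ‖v x - v y‖ ≤ L * ‖x - y‖)
    (hmon : ∀ x y : H, c * ‖x - y‖ ^ 2 ≤ ⟪v x - v y, x - y⟫)
    (αs : H) (hzero : v αs = 0)
    (γ : ℝ) (hγ0 : 0 < γ) (hγ : γ ≤ 1 / L)
    (a ah : ℕ → H)
    (hah : ∀ n, ah n = a n - γ • v (a n))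
    (ha : ∀ n, a (n + 1) = a n - γ • v (ah n))
    (hsum : ∀ (x : H) (n : ℕ), 1 ≤ n →
      ∑ i ∈ Finset.Icc 1 n, ⟪v (ah i), ah i - x⟫ ≤ ‖x - a 1‖ ^ 2 / (2 * γ)) :
    ∀ n : ℕ, 1 ≤ n →
      ‖αs - (n : ℝ)⁻¹ • ∑ i ∈ Finset.Icc 1 n, ah i‖ ^ 2 ≤
        ‖αs - a 1‖ ^ 2 / (2 * γ * c * n) := by
  intro n hn
  have hnpos : (0 : ℝ) < n := by exact_mod_cast hn
  -- key sum bound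
  have hstep : ∀ i, c * ‖ah i - αs‖ ^ 2 ≤ ⟪v (ah i), ah i - αs⟫ := by
    intro i
    have := hmon (ah i) αs
    rwa [hzero, sub_zero] at this
  have hS : c * ∑ i ∈ Finset.Icc 1 n, ‖ah i - αs‖ ^ 2 ≤ ‖αs - a 1‖ ^ 2 / (2 * γ) := by
    rw [Finset.mul_sum]
    exact le_trans (Finset.sum_le_sum fun i _ => hstep i) (hsum αs n hn)
  -- rewrite the average
  have hcard : (Finset.Icc 1 n).card = n := by simp
  have hrw : αs - (n : ℝ)⁻¹ • ∑ i ∈ Finset.Icc 1 n, ah i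
      = (n : ℝ)⁻¹ • ∑ i ∈ Finset.Icc 1 n, (αs - ah i) := by
    rw [Finset.sum_sub_distrib, Finset.sum_const, hcard, smul_sub,
      ← Nat.cast_smul_eq_nsmul ℝ, smul_smul, inv_mul_cancel₀ (ne_of_gt hnpos), one_smul]
  rw [hrw]
  have hnorm : ‖(n : ℝ)⁻¹ • ∑ i ∈ Finset.Icc 1 n, (αs - ah i)‖ ^ 2
      ≤ (n : ℝ)⁻¹ * ∑ i ∈ Finset.Icc 1 n, ‖ah i - αs‖ ^ 2 := by
    have h1 : ‖∑ i ∈ Finset.Icc 1 n, (αs - ah i)‖ ≤ ∑ i ∈ Finset.Icc 1 n, ‖ah i - αs‖ := by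
      refine (norm_sum_le _ _).trans_eq ?_
      simp [norm_sub_rev]
    have h2 : (∑ i ∈ Finset.Icc 1 n, ‖ah i - αs‖) ^ 2
        ≤ (n : ℝ) * ∑ i ∈ Finset.Icc 1 n, ‖ah i - αs‖ ^ 2 := by
      have := sq_sum_le_card_mul_sum_sq (s := Finset.Icc 1 n) (f := fun i => ‖ah i - αs‖)
      rwa [hcard] at this
    rw [norm_smul, mul_pow, Real.norm_eq_abs, sq_abs]
    calc (n : ℝ)⁻¹ ^ 2 * ‖∑ i ∈ Finset.Icc 1 n, (αs - ah i)‖ ^ 2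
        ≤ (n : ℝ)⁻¹ ^ 2 * ((n : ℝ) * ∑ i ∈ Finset.Icc 1 n, ‖ah i - αs‖ ^ 2) := by
          apply mul_le_mul_of_nonneg_left _ (by positivity)
          exact le_trans (pow_le_pow_left₀ (norm_nonneg _) h1 2) h2
      _ = (n : ℝ)⁻¹ * ∑ i ∈ Finset.Icc 1 n, ‖ah i - αs‖ ^ 2 := by
          field_simp
  refine hnorm.trans ?_
  have hS' : ∑ i ∈ Finset.Icc 1 n, ‖ah i - αs‖ ^ 2 ≤ ‖αs - a 1‖ ^ 2 / (2 * γ * c) := by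
    rw [le_div_iff₀ (by positivity)]
    calc (∑ i ∈ Finset.Icc 1 n, ‖ah i - αs‖ ^ 2) * (2 * γ * c)
        = (c * ∑ i ∈ Finset.Icc 1 n, ‖ah i - αs‖ ^ 2) * (2 * γ) := by ring
      _ ≤ ‖αs - a 1‖ ^ 2 / (2 * γ) * (2 * γ) := by
          exact mul_le_mul_of_nonneg_right hS (by positivity)
      _ = ‖αs - a 1‖ ^ 2 := by field_simp
  calc (n : ℝ)⁻¹ * ∑ i ∈ Finset.Icc 1 n, ‖ah i - αs‖ ^ 2
      ≤ (n : ℝ)⁻¹ * (‖αs - a 1‖ ^ 2 / (2 * γ * c)) :=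
        mul_le_mul_of_nonneg_left hS' (by positivity)
    _ = ‖αs - a 1‖ ^ 2 / (2 * γ * c * n) := by rw [inv_mul_eq_div, div_div]
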